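/- Normalized length commutes with filtered colimits along surjective transition maps of finite normalized length: if (M_i) is a filtered system of m_A-power-torsion A_∞,0^{nc}-modules with surjective transition maps and λ_∞(M_i) < ∞ for every i, then λ_∞(colim_i M_i) = lim_i λ_∞(M_i) = inf_i λ_∞(M_i). -/

import Mathlib

universe u

open IsLocalRing

/-- The length of an `R`-module `M`, valued in `ℝ≥0∞`: the supremum of the lengths of chains
of submodules of `M`. -/
noncomputable def moduleLength (R M : Type*) [Semiring R] [AddCommGroup M] [Module R M] :
    ENNReal :=
  ⨆ s : LTSeries (Submodule R M), (s.length : ENNReal)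

/-- The `n`-th level `A_n = A[x_1^{1/pⁿ}, …, x_d^{1/pⁿ}]` of the tower whose union is
`A_∞,0^{nc}`, realized as the subalgebra of `B` generated by the chosen compatible
`pⁿ`-th roots `ξ i n` of the regular system of parameters. -/
noncomputable def rootLevel (A B : Type u) [CommRing A] [CommRing B] [Algebra A B]
    {d : ℕ} (ξ : Fin d → ℕ → B) (n : ℕ) : Subalgebra A B :=
  Algebra.adjoin A (Set.range fun i => ξ i n)

/-- For a `B`-module `M` and a set `S ⊆ M` of generators, the `A`-submodule `S·A_n`
generated by all `A_n`-multiples of elements of `S`. -/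
noncomputable def levelSpan (A B : Type u) [CommRing A] [CommRing B] [Algebra A B]
    {d : ℕ} (ξ : Fin d → ℕ → B) (n : ℕ) (M : Type u) [AddCommGroup M] [Module A M]
    [Module B M] (S : Set M) : Submodule A M :=
  Submodule.span A {y : M | ∃ b ∈ rootLevel A B ξ n, ∃ s ∈ S, y = b • s}

/-- **Faltings' normalized length** of an `A_∞,0^{nc}`-module `M` (where
`B = A_∞,0^{nc} = ∪ₙ Aₙ`): the supremum, over finitely generated `B`-submodules `N` of `M`,
of the infimum over finite generating sets `S` of `N` and levels `n` of
`length_A(S·A_n)/p^{nd}`. -/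
noncomputable def normalizedLength (A B : Type u) [CommRing A] [CommRing B] [Algebra A B]
    (p : ℕ) {d : ℕ} (ξ : Fin d → ℕ → B) (M : Type u) [AddCommGroup M] [Module A M]
    [Module B M] : ENNReal :=
  ⨆ (N : Submodule B M) (_ : N.FG),
    ⨅ (S : Finset M) (_ : Submodule.span B (S : Set M) = N) (n : ℕ),
      moduleLength A ↥(levelSpan A B ξ n M (S : Set M)) / (p : ENNReal) ^ (n * d)

section LengthTheory

variable {R M N : Type*} [Ring R] [AddCommGroup M] [Module R M]
  [AddCommGroup N] [Module R N]

lemma moduleLength_le_of_injective (f : M →ₗ[R] N) (hf : Function.Injective f) :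
    moduleLength R M ≤ moduleLength R N :=
  iSup_le fun s => le_iSup_of_le
    (s.map (Submodule.map f)
      (Monotone.strictMono_of_injective (fun _ _ h => Submodule.map_mono h)
        (Submodule.map_injective_of_injective hf))) (by simp)

lemma moduleLength_le_of_surjective (f : M →ₗ[R] N) (hf : Function.Surjective f) :
    moduleLength R N ≤ moduleLength R M :=
  iSup_le fun s => le_iSup_of_le
    (s.map (Submodule.comap f)
      (Monotone.strictMono_of_injective (fun _ _ h => Submodule.comap_mono h)
        (Submodule.comap_injective_of_surjective hf))) (by simp)

lemma moduleLength_congr (e : M ≃ₗ[R] N) : moduleLength R M = moduleLength R N :=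
  le_antisymm (moduleLength_le_of_injective e.toLinearMap e.injective)
    (moduleLength_le_of_injective e.symm.toLinearMap e.symm.injective)

lemma moduleLength_eq_zero_of_subsingleton [Subsingleton M] : moduleLength R M = 0 := by
  haveI : Subsingleton (Submodule R M) := by
    constructor
    intro U V
    ext x
    have : x = 0 := Subsingleton.elim x 0
    simp [this]
  refine le_antisymm (iSup_le fun s => ?_) zero_le
  rcases Nat.eq_zero_or_pos s.length with h | h
  · simp [h]
  · exfalso
    have := s.strictMono (show (⟨0, by omega⟩ : Fin (s.length + 1)) < ⟨1, by omega⟩ by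
      simp [Fin.lt_def])
    exact this.ne (Subsingleton.elim _ _)

/-- Auxiliary : build chains from two jointly-strict monotone sequences. -/
private lemma exists_chains {α β : Type*} [PartialOrder α] [PartialOrder β]
    (l : ℕ) (f : ℕ → α) (g : ℕ → β) (hf : Monotone f) (hg : Monotone g)
    (h : ∀ i < l, f i < f (i + 1) ∨ g i < g (i + 1)) :
    ∃ (ca : LTSeries α) (cb : LTSeries β),
      ca.last = f l ∧ cb.last = g l ∧ l ≤ ca.length + cb.length := by
  induction l with
  | zero => exact ⟨RelSeries.singleton _ (f 0), RelSeries.singleton _ (g 0), rfl, rfl, by simp⟩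
  | succ l ih =>
    obtain ⟨ca, cb, hca, hcb, hlen⟩ := ih (fun i hi => h i (by omega))
    rcases (hf (Nat.le_succ l)).lt_or_eq with hfl | hfl
    · rcases (hg (Nat.le_succ l)).lt_or_eq with hgl | hgl
      · exact ⟨ca.snoc _ (hca ▸ hfl), cb.snoc _ (hcb ▸ hgl), RelSeries.last_snoc _ _ _,
          RelSeries.last_snoc _ _ _, by simp [RelSeries.snoc_length]; omega⟩
      · exact ⟨ca.snoc _ (hca ▸ hfl), cb, RelSeries.last_snoc _ _ _, hgl ▸ hcb,
          by simp [RelSeries.snoc_length]; omega⟩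
    · rcases (hg (Nat.le_succ l)).lt_or_eq with hgl | hgl
      · exact ⟨ca, cb.snoc _ (hcb ▸ hgl), hfl ▸ hca, RelSeries.last_snoc _ _ _,
          by simp [RelSeries.snoc_length]; omega⟩
      · rcases h l (by omega) with hh | hh
        · exact absurd hfl hh.ne
        · exact absurd hgl hh.ne

private lemma chain_le_add {α β : Type*} [PartialOrder α] [PartialOrder β]
    (l : ℕ) (f : ℕ → α) (g : ℕ → β) (hf : Monotone f) (hg : Monotone g)
    (h : ∀ i < l, f i < f (i + 1) ∨ g i < g (i + 1)) :
    (l : ENNReal) ≤ (⨆ s : LTSeries α, (s.length : ENNReal))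
      + (⨆ s : LTSeries β, (s.length : ENNReal)) := by
  obtain ⟨ca, cb, -, -, hlen⟩ := exists_chains l f g hf hg h
  calc (l : ENNReal) ≤ ((ca.length + cb.length : ℕ) : ENNReal) := by exact_mod_cast hlen
    _ = (ca.length : ENNReal) + cb.length := by push_cast; ring
    _ ≤ _ := add_le_add (le_iSup (fun s : LTSeries α => (s.length : ENNReal)) ca)
        (le_iSup (fun s : LTSeries β => (s.length : ENNReal)) cb)

lemma moduleLength_le_add (U : Submodule R M) :
    moduleLength R M ≤ moduleLength R U + moduleLength R (M ⧸ U) := by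
  refine iSup_le fun s => ?_
  set l := s.length with hl
  have key : ∀ (W W' : Submodule R M), W < W' →
      Submodule.comap U.subtype W = Submodule.comap U.subtype W' →
      Submodule.map U.mkQ W = Submodule.map U.mkQ W' → False := by
    intro W W' hWW' hc hm
    have h1 : U ⊓ W = U ⊓ W' := by
      rw [← Submodule.map_comap_subtype, hc, Submodule.map_comap_subtype]
    have h2 : W ⊔ U = W' ⊔ U := by
      have := congrArg (Submodule.comap U.mkQ) hm
      rwa [Submodule.comap_map_eq, Submodule.comap_map_eq, Submodule.ker_mkQ] at this
    have : W' = W := by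
      calc W' = (W' ⊔ U) ⊓ W' := (inf_eq_right.2 le_sup_left).symm
        _ = (W ⊔ U) ⊓ W' := by rw [h2]
        _ = W ⊔ (U ⊓ W') := sup_inf_assoc_of_le _ hWW'.le
        _ = W ⊔ (U ⊓ W) := by rw [h1]
        _ = W := sup_eq_left.2 inf_le_right
    exact hWW'.ne' this
  have mono1 : Monotone (fun i : ℕ => Submodule.comap U.subtype (s ⟨min i s.length, by omega⟩)) :=
    fun i j hij => Submodule.comap_mono (s.strictMono.monotone (by
      simp only [Fin.mk_le_mk]; omega))
  have mono2 : Monotone (fun i : ℕ => Submodule.map U.mkQ (s ⟨min i s.length, by omega⟩)) :=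
    fun i j hij => Submodule.map_mono (s.strictMono.monotone (by
      simp only [Fin.mk_le_mk]; omega))
  refine (chain_le_add s.length _ _ mono1 mono2 fun i hi => ?_)
  by_contra hcon
  push_neg at hcon
  obtain ⟨h1', h2'⟩ := hcon
  have hlt : s ⟨min i s.length, by omega⟩ < s ⟨min (i+1) s.length, by omega⟩ :=
    s.strictMono (by simp only [Fin.mk_lt_mk]; omega)
  exact key _ _ hlt ((mono1 (Nat.le_succ i)).lt_or_eq.resolve_left h1')
    ((mono2 (Nat.le_succ i)).lt_or_eq.resolve_left h2')

lemma add_le_moduleLength (U : Submodule R M) :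
    moduleLength R U + moduleLength R (M ⧸ U) ≤ moduleLength R M := by
  have : moduleLength R U + moduleLength R (M ⧸ U)
      = ⨆ (ca : LTSeries (Submodule R U)) (cb : LTSeries (Submodule R (M ⧸ U))),
        ((ca.length : ENNReal) + cb.length) := by
    haveI : Nonempty (LTSeries (Submodule R U)) := ⟨RelSeries.singleton _ ⊥⟩
    haveI : Nonempty (LTSeries (Submodule R (M ⧸ U))) := ⟨RelSeries.singleton _ ⊥⟩
    rw [moduleLength, ENNReal.iSup_add]
    congr 1; funext ca
    rw [moduleLength, ENNReal.add_iSup]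
  rw [this]
  refine iSup_le fun ca => iSup_le fun cb => ?_
  have hmap1 : StrictMono (Submodule.map U.subtype) :=
    Monotone.strictMono_of_injective (fun _ _ h => Submodule.map_mono h)
      (Submodule.map_injective_of_injective U.injective_subtype)
  have hmap2 : StrictMono (Submodule.comap U.mkQ) :=
    Monotone.strictMono_of_injective (fun _ _ h => Submodule.comap_mono h)
      (Submodule.comap_injective_of_surjective U.mkQ_surjective)
  set ca' := ca.map _ hmap1 with hca'
  set cb' := cb.map _ hmap2 with hcb'
  have hle : ca'.last ≤ cb'.head := by
    rw [hca', hcb', LTSeries.last_map, LTSeries.head_map]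
    refine le_trans (Submodule.map_subtype_le U _) ?_
    intro x hx
    simp only [Submodule.mem_comap]
    convert Submodule.zero_mem _
    rwa [Submodule.mkQ_apply, Submodule.Quotient.mk_eq_zero]
  rcases hle.lt_or_eq with hlt | heq
  · refine le_trans ?_ (le_iSup (fun s : LTSeries (Submodule R M) => (s.length : ENNReal))
      (ca'.append cb' hlt))
    rw [RelSeries.append_length]
    have l1 : ca'.length = ca.length := rfl
    have l2 : cb'.length = cb.length := rfl
    rw [l1, l2]
    push_cast
    have := le_self_add (a := (ca.length : ENNReal) + cb.length) (b := 1)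
    calc (ca.length : ENNReal) + cb.length ≤ (ca.length : ENNReal) + cb.length + 1 := le_self_add
      _ = _ := by ring
  · refine le_trans ?_ (le_iSup (fun s : LTSeries (Submodule R M) => (s.length : ENNReal))
      (ca'.smash cb' heq))
    have : (ca'.smash cb' heq).length = ca.length + cb.length := rfl
    rw [this]
    push_cast
    exact le_rfl

lemma moduleLength_additive (U : Submodule R M) :
    moduleLength R M = moduleLength R U + moduleLength R (M ⧸ U) :=
  le_antisymm (moduleLength_le_add U) (add_le_moduleLength U)

lemma moduleLength_mono {U V : Submodule R M} (h : U ≤ V) :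
    moduleLength R U ≤ moduleLength R V :=
  moduleLength_le_of_injective (Submodule.inclusion h) (Submodule.inclusion_injective h)

lemma moduleLength_bot_eq_zero : moduleLength R (⊥ : Submodule R M) = 0 := by
  haveI : Subsingleton (⊥ : Submodule R M) := by
    constructor
    rintro ⟨a, ha⟩ ⟨b, hb⟩
    simp only [Submodule.mem_bot] at ha hb
    subst ha; subst hb; rfl
  exact moduleLength_eq_zero_of_subsingleton

lemma moduleLength_map_add_ker (h : M →ₗ[R] N) (V : Submodule R M) :
    moduleLength R (V.map h) + moduleLength R (LinearMap.ker h ⊓ V : Submodule R M)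
      = moduleLength R V := by
  set φ : V →ₗ[R] N := h.comp V.subtype with hφ
  have h1 : LinearMap.range φ = V.map h := by
    rw [hφ, LinearMap.range_comp, Submodule.range_subtype]
  have h2 : LinearMap.ker φ = Submodule.comap V.subtype (LinearMap.ker h ⊓ V) := by
    rw [hφ, LinearMap.ker_comp]
    ext x
    simp only [Submodule.mem_comap, Submodule.mem_inf, LinearMap.mem_ker]
    exact ⟨fun hx => ⟨hx, x.2⟩, fun hx => hx.1⟩
  have e1 : (V ⧸ LinearMap.ker φ) ≃ₗ[R] LinearMap.range φ := φ.quotKerEquivRange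
  have e2 : (LinearMap.ker φ : Type _) ≃ₗ[R] (LinearMap.ker h ⊓ V : Submodule R M) := by
    rw [h2]
    exact Submodule.comapSubtypeEquivOfLe inf_le_right
  calc moduleLength R (V.map h) + moduleLength R (LinearMap.ker h ⊓ V : Submodule R M)
      = moduleLength R (LinearMap.range φ) + moduleLength R (LinearMap.ker φ) := by
        rw [h1, moduleLength_congr e2]
    _ = moduleLength R (LinearMap.ker φ) + moduleLength R (V ⧸ LinearMap.ker φ) := by
        rw [← moduleLength_congr e1, add_comm]
    _ = moduleLength R V := (moduleLength_additive _).symm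

lemma moduleLength_map_le (h : M →ₗ[R] N) (V : Submodule R M) :
    moduleLength R (V.map h) ≤ moduleLength R V :=
  le_trans le_self_add (moduleLength_map_add_ker h V).le

lemma moduleLength_map_eq (h : M →ₗ[R] N) (V : Submodule R M)
    (hinj : ∀ x ∈ V, h x = 0 → x = 0) :
    moduleLength R (V.map h) = moduleLength R V := by
  have hbot : (LinearMap.ker h ⊓ V : Submodule R M) = ⊥ := by
    rw [eq_bot_iff]
    rintro x ⟨hx1, hx2⟩
    exact hinj x hx2 hx1
  have := moduleLength_map_add_ker h V
  rwa [hbot, moduleLength_bot_eq_zero, add_zero] at this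

lemma moduleLength_sup_le (U V : Submodule R M) :
    moduleLength R (U ⊔ V : Submodule R M) ≤ moduleLength R U + moduleLength R V := by
  set W := (U ⊔ V : Submodule R M)
  set U' : Submodule R W := Submodule.comap W.subtype U
  have e1 : (U' : Type _) ≃ₗ[R] U := Submodule.comapSubtypeEquivOfLe le_sup_left
  have hsurj : Function.Surjective
      ((U'.mkQ).comp (Submodule.inclusion (le_sup_right : V ≤ W))) := by
    intro w
    obtain ⟨x, rfl⟩ := Submodule.Quotient.mk_surjective _ w
    obtain ⟨u, hu, v, hv, huv⟩ := Submodule.mem_sup.1 x.2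
    refine ⟨⟨v, hv⟩, ?_⟩
    simp only [LinearMap.comp_apply, Submodule.mkQ_apply]
    rw [Submodule.Quotient.eq]
    refine (Submodule.mem_comap).2 ?_
    have hval : (W.subtype) ((Submodule.inclusion (le_sup_right : V ≤ W)) ⟨v, hv⟩ - x) = -u := by
      simp only [map_sub, Submodule.coe_subtype, Submodule.coe_inclusion]
      rw [← huv]
      abel
    rw [hval]
    exact neg_mem hu
  calc moduleLength R W = moduleLength R U' + moduleLength R (W ⧸ U') := moduleLength_additive U'
    _ ≤ moduleLength R U + moduleLength R V :=
        add_le_add (moduleLength_congr e1).le (moduleLength_le_of_surjective _ hsurj)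

lemma moduleLength_finsetSup_le {ι : Type*} (s : Finset ι) (V : ι → Submodule R M) :
    moduleLength R (s.sup V : Submodule R M) ≤ ∑ i ∈ s, moduleLength R (V i) := by
  induction s using Finset.cons_induction with
  | empty => rw [Finset.sup_empty, moduleLength_bot_eq_zero]; exact zero_le
  | cons a s ha ih =>
    rw [Finset.sup_cons, Finset.sum_cons]
    exact le_trans (moduleLength_sup_le _ _) (add_le_add le_rfl ih)

lemma moduleLength_iSup_le {ι : Type*} [Fintype ι] (V : ι → Submodule R M) :
    moduleLength R (⨆ i, V i : Submodule R M) ≤ ∑ i, moduleLength R (V i) := by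
  rw [← Finset.sup_univ_eq_iSup]
  exact moduleLength_finsetSup_le _ _

end LengthTheory

section Levels

variable {A B : Type u} [CommRing A] [CommRing B] [Algebra A B]
  {d : ℕ} {ξ : Fin d → ℕ → B} {p : ℕ}

lemma rootLevel_mono (hξ : ∀ i n, ξ i (n + 1) ^ p = ξ i n) :
    Monotone (rootLevel A B ξ) := by
  refine monotone_nat_of_le_succ fun n => ?_
  rw [rootLevel, Algebra.adjoin_le_iff]
  rintro x ⟨i, rfl⟩
  show ξ i n ∈ _
  rw [← hξ i n]
  exact SetLike.mem_coe.2 (pow_mem (Algebra.subset_adjoin (Set.mem_range_self i)) p)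

variable (A) in
/-- Scalar multiplication by `b : B` as an `A`-linear endomorphism. -/
noncomputable def smulAL {M : Type u} [AddCommGroup M] [Module A M] [Module B M]
    [IsScalarTower A B M] (b : B) : M →ₗ[A] M where
  toFun m := b • m
  map_add' := smul_add b
  map_smul' a m := by
    simp only [RingHom.id_apply]
    rw [← algebraMap_smul B a m, ← algebraMap_smul B a (b • m), smul_smul, smul_smul, mul_comm]

@[simp] lemma smulAL_apply {M : Type u} [AddCommGroup M] [Module A M] [Module B M]
    [IsScalarTower A B M] (b : B) (m : M) : smulAL A b m = b • m := rfl

variable {M M' : Type u} [AddCommGroup M] [Module A M] [Module B M] [IsScalarTower A B M]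
  [AddCommGroup M'] [Module A M'] [Module B M'] [IsScalarTower A B M']

lemma levelSpan_mono {S T : Set M} (h : S ⊆ T) (n : ℕ) :
    levelSpan A B ξ n M S ≤ levelSpan A B ξ n M T :=
  Submodule.span_mono (by rintro y ⟨b, hb, s, hs, rfl⟩; exact ⟨b, hb, s, h hs, rfl⟩)

lemma map_levelSpan (f : M →ₗ[B] M') (S : Set M) (n : ℕ) :
    (levelSpan A B ξ n M S).map (f.restrictScalars A) = levelSpan A B ξ n M' (f '' S) := by
  rw [levelSpan, levelSpan, Submodule.map_span]
  congr 1
  ext y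
  constructor
  · rintro ⟨z, ⟨b, hb, s, hs, rfl⟩, rfl⟩
    exact ⟨b, hb, f s, ⟨s, hs, rfl⟩, by simp [map_smul]⟩
  · rintro ⟨b, hb, z, ⟨s, hs, rfl⟩, rfl⟩
    exact ⟨b • s, ⟨b, hb, s, hs, rfl⟩, by simp [map_smul]⟩

/-- `A_n`-multiples stay in the level span. -/
lemma smul_mem_levelSpan {n : ℕ} {b : B} (hb : b ∈ rootLevel A B ξ n) {S : Set M} {x : M}
    (hx : x ∈ levelSpan A B ξ n M S) : b • x ∈ levelSpan A B ξ n M S := by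
  induction hx using Submodule.span_induction with
  | mem y hy =>
    obtain ⟨c, hc, s, hs, rfl⟩ := hy
    rw [smul_smul]
    exact Submodule.subset_span ⟨b * c, mul_mem hb hc, s, hs, rfl⟩
  | zero => rw [smul_zero]; exact Submodule.zero_mem _
  | add x y _ _ ihx ihy => rw [smul_add]; exact Submodule.add_mem _ ihx ihy
  | smul a x _ ih =>
    rw [← algebraMap_smul B a x, smul_smul, mul_comm, ← smul_smul, algebraMap_smul]
    exact Submodule.smul_mem _ a ih

lemma fg_of_le_fg {R N : Type*} [Ring R] [IsNoetherianRing R] [AddCommGroup N] [Module R N]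
    {K V : Submodule R N} (hV : V.FG) (h : K ≤ V) : K.FG := by
  haveI : IsNoetherian R V := isNoetherian_of_fg_of_noetherian V hV
  have h1 : (Submodule.comap V.subtype K).FG := IsNoetherian.noetherian _
  have h2 : K = (Submodule.comap V.subtype K).map V.subtype := by
    rw [Submodule.map_comap_subtype, inf_eq_right.2 h]
  rw [h2]; exact h1.map _

lemma levelSpan_fg {n : ℕ} (hfin : Module.Finite A (rootLevel A B ξ n)) (S : Finset M) :
    (levelSpan A B ξ n M (S : Set M)).FG := by
  classical
  set ρ : M → (↥(rootLevel A B ξ n) →ₗ[A] M) := fun s =>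
    { toFun := fun c => (c : B) • s
      map_add' := fun c c' => by
        simp [add_smul]
      map_smul' := fun a c => by
        simp only [RingHom.id_apply, SetLike.val_smul, smul_assoc] } with hρ
  have heq : levelSpan A B ξ n M (S : Set M) = S.sup (fun s => LinearMap.range (ρ s)) := by
    apply le_antisymm
    · rw [levelSpan, Submodule.span_le]
      rintro _ ⟨b, hb, s, hs, rfl⟩
      exact (Finset.le_sup (f := fun s => LinearMap.range (ρ s)) hs :
        LinearMap.range (ρ s) ≤ _) ⟨⟨b, hb⟩, rfl⟩
    · refine Finset.sup_le fun s hs => ?_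
      rintro _ ⟨c, rfl⟩
      exact Submodule.subset_span ⟨c, c.2, s, hs, rfl⟩
  rw [heq]
  refine Submodule.fg_finset_sup _ _ fun s _ => ?_
  rw [← Submodule.map_top]
  exact (Module.finite_def.mp hfin).map _

end Levels

section Monomials

variable {A B : Type u} [CommRing A] [CommRing B] [Algebra A B]
  {d : ℕ} {ξ : Fin d → ℕ → B} {p : ℕ}

variable (ξ) in
/-- The monomial `∏ᵢ ξᵢ(n+1)^(aᵢ)`. -/
noncomputable def levelMon (n : ℕ) (a : Fin d → ℕ) : B := ∏ i, ξ i (n + 1) ^ (a i)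

lemma rootLevel_succ_subset_span (hξ : ∀ i n, ξ i (n + 1) ^ p = ξ i n) (hp1 : 1 < p) (n : ℕ) :
    (rootLevel A B ξ (n + 1) : Set B) ⊆
      (Submodule.span A {y : B | ∃ a : Fin d → ℕ, (∀ i, a i < p) ∧
        ∃ c ∈ rootLevel A B ξ n, y = levelMon ξ n a * c} : Submodule A B) := by
  have hp0 : 0 < p := lt_trans one_pos hp1
  set G : Set B := {y : B | ∃ a : Fin d → ℕ, (∀ i, a i < p) ∧
    ∃ c ∈ rootLevel A B ξ n, y = levelMon ξ n a * c} with hG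
  set T : Submodule A B := Submodule.span A G with hT
  have hcore : ∀ x ∈ G, ∀ y ∈ G, x * y ∈ T := by
    rintro _ ⟨a, ha, c, hc, rfl⟩ _ ⟨a', ha', c', hc', rfl⟩
    have key : (levelMon ξ n a * c) * (levelMon ξ n a' * c')
        = levelMon ξ n (fun i => (a i + a' i) % p)
          * ((∏ i, (ξ i n) ^ ((a i + a' i) / p)) * (c * c')) := by
      rw [levelMon, levelMon, levelMon]
      calc (∏ i, ξ i (n+1) ^ a i) * c * ((∏ i, ξ i (n+1) ^ a' i) * c')
          = ((∏ i, ξ i (n+1) ^ a i) * (∏ i, ξ i (n+1) ^ a' i)) * (c * c') := by ring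
        _ = (∏ i, ξ i (n+1) ^ (a i + a' i)) * (c * c') := by
            rw [← Finset.prod_mul_distrib]
            congr 1
            exact Finset.prod_congr rfl fun i _ => (pow_add _ _ _).symm
        _ = (∏ i, (ξ i (n+1) ^ ((a i + a' i) % p) * (ξ i n) ^ ((a i + a' i) / p)))
            * (c * c') := by
            congr 1
            refine Finset.prod_congr rfl fun i _ => ?_
            conv_lhs => rw [← Nat.mod_add_div (a i + a' i) p]
            rw [pow_add, pow_mul, hξ]
        _ = _ := by rw [Finset.prod_mul_distrib]; ring
    rw [key]
    refine Submodule.subset_span ⟨_, fun i => Nat.mod_lt _ hp0, _,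
      mul_mem (prod_mem fun i _ => pow_mem (Algebra.subset_adjoin (Set.mem_range_self i)) _)
        (mul_mem hc hc'), rfl⟩
  have hmul : ∀ x ∈ T, ∀ y ∈ T, x * y ∈ T := by
    have hTT : T * T ≤ T := by
      rw [Submodule.mul_le]
      intro x hx y hy
      induction hx using Submodule.span_induction with
      | mem x hxG =>
        induction hy using Submodule.span_induction with
        | mem y hyG => exact hcore x hxG y hyG
        | zero => rw [mul_zero]; exact Submodule.zero_mem _
        | add y z _ _ ihy ihz => rw [mul_add]; exact Submodule.add_mem _ ihy ihz
        | smul a y _ ih => rw [Algebra.mul_smul_comm]; exact Submodule.smul_mem _ a ih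
      | zero => rw [zero_mul]; exact Submodule.zero_mem _
      | add x z _ _ ihx ihz => rw [add_mul]; exact Submodule.add_mem _ ihx ihz
      | smul a x _ ih => rw [Algebra.smul_mul_assoc]; exact Submodule.smul_mem _ a ih
    intro x hx y hy
    exact hTT (Submodule.mul_mem_mul hx hy)
  intro b hb
  induction hb using Algebra.adjoin_induction with
  | mem x hx =>
    obtain ⟨i, rfl⟩ := hx
    refine Submodule.subset_span ⟨fun j => if j = i then 1 else 0, fun j => ?_, 1,
      Subalgebra.one_mem _, ?_⟩
    · dsimp only
      split <;> omega
    · rw [mul_one, levelMon]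
      rw [Finset.prod_eq_single i (fun j _ hj => by simp [if_neg hj]) (by simp)]
      simp
  | algebraMap r =>
    refine Submodule.subset_span ⟨fun _ => 0, fun _ => hp0, algebraMap A B r,
      Subalgebra.algebraMap_mem _ r, ?_⟩
    simp [levelMon]
  | add x y hx hy ihx ihy => exact Submodule.add_mem _ ihx ihy
  | mul x y hx hy ihx ihy => exact hmul _ ihx _ ihy

variable {M : Type u} [AddCommGroup M] [Module A M] [Module B M] [IsScalarTower A B M]

lemma levelSpan_succ_le (hξ : ∀ i n, ξ i (n + 1) ^ p = ξ i n) (hp1 : 1 < p)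
    (S : Set M) (n : ℕ) :
    levelSpan A B ξ (n + 1) M S ≤
      ⨆ a : Fin d → Fin p, (levelSpan A B ξ n M S).map
        (smulAL A (levelMon ξ n (fun i => (a i : ℕ)))) := by
  rw [levelSpan, Submodule.span_le]
  rintro _ ⟨b, hb, s, hs, rfl⟩
  rw [SetLike.mem_coe]
  have hb' := rootLevel_succ_subset_span hξ hp1 n hb
  clear hb
  induction hb' using Submodule.span_induction with
  | mem y hy =>
    obtain ⟨a, ha, c, hc, rfl⟩ := hy
    have : (levelMon ξ n a * c) • s
        = levelMon ξ n (fun i => ((⟨a i, ha i⟩ : Fin p) : ℕ)) • (c • s) := by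
      rw [mul_smul]
    rw [this]
    refine le_iSup (fun a : Fin d → Fin p => (levelSpan A B ξ n M S).map
        (smulAL A (levelMon ξ n (fun i => (a i : ℕ))))) (fun i => ⟨a i, ha i⟩) ?_
    exact ⟨c • s, Submodule.subset_span ⟨c, hc, s, hs, rfl⟩, rfl⟩
  | zero => rw [zero_smul]; exact Submodule.zero_mem _
  | add x y _ _ ihx ihy => rw [add_smul]; exact Submodule.add_mem _ ihx ihy
  | smul a x _ ih =>
    rw [smul_assoc]
    exact Submodule.smul_mem _ a ih

lemma moduleLength_levelSpan_succ_le (hξ : ∀ i n, ξ i (n + 1) ^ p = ξ i n) (hp1 : 1 < p)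
    (S : Set M) (n : ℕ) :
    moduleLength A (levelSpan A B ξ (n + 1) M S)
      ≤ (p : ENNReal) ^ d * moduleLength A (levelSpan A B ξ n M S) := by
  classical
  calc moduleLength A (levelSpan A B ξ (n + 1) M S)
      ≤ moduleLength A (⨆ a : Fin d → Fin p, (levelSpan A B ξ n M S).map
          (smulAL A (levelMon ξ n (fun i => (a i : ℕ)))) : Submodule A M) :=
        moduleLength_mono (levelSpan_succ_le hξ hp1 S n)
    _ ≤ ∑ a : Fin d → Fin p, moduleLength A ((levelSpan A B ξ n M S).map
          (smulAL A (levelMon ξ n (fun i => (a i : ℕ))))) := moduleLength_iSup_le _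
    _ ≤ ∑ _a : Fin d → Fin p, moduleLength A (levelSpan A B ξ n M S) :=
        Finset.sum_le_sum fun a _ => moduleLength_map_le _ _
    _ = (p : ENNReal) ^ d * moduleLength A (levelSpan A B ξ n M S) := by
        rw [Finset.sum_const, Finset.card_univ, Fintype.card_fun]
        rw [nsmul_eq_mul]
        congr 1
        push_cast
        simp

end Monomials
section Lfun

/-- The `n`-th normalized length approximation for generating set `S`. -/
noncomputable def lfun (A B : Type u) [CommRing A] [CommRing B] [Algebra A B]
    (p : ℕ) {d : ℕ} (ξ : Fin d → ℕ → B) (M : Type u) [AddCommGroup M] [Module A M]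
    [Module B M] (S : Set M) (n : ℕ) : ENNReal :=
  moduleLength A (levelSpan A B ξ n M S) / (p : ENNReal) ^ (n * d)

variable {A B : Type u} [CommRing A] [CommRing B] [Algebra A B]
  {d : ℕ} {ξ : Fin d → ℕ → B} {p : ℕ}
  {M M' : Type u} [AddCommGroup M] [Module A M] [Module B M] [IsScalarTower A B M]
  [AddCommGroup M'] [Module A M'] [Module B M'] [IsScalarTower A B M']

lemma normalizedLength_def :
    normalizedLength A B p ξ M = ⨆ (N : Submodule B M) (_ : N.FG),
      ⨅ (S : Finset M) (_ : Submodule.span B (S : Set M) = N) (n : ℕ),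
        lfun A B p ξ M (S : Set M) n := rfl

lemma lfun_antitone (hξ : ∀ i n, ξ i (n + 1) ^ p = ξ i n) (hp1 : 1 < p) (S : Set M) :
    Antitone (lfun A B p ξ M S) := by
  refine antitone_nat_of_succ_le fun n => ?_
  have hlen := moduleLength_levelSpan_succ_le (A := A) (M := M) hξ hp1 S n
  have hpow : (p : ENNReal) ^ ((n + 1) * d) = (p : ENNReal) ^ d * (p : ENNReal) ^ (n * d) := by
    rw [← pow_add]; congr 1; ring
  rw [lfun, lfun, hpow]
  calc moduleLength A (levelSpan A B ξ (n + 1) M S) / ((p : ENNReal) ^ d * (p : ENNReal) ^ (n * d))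
      ≤ ((p : ENNReal) ^ d * moduleLength A (levelSpan A B ξ n M S))
          / ((p : ENNReal) ^ d * (p : ENNReal) ^ (n * d)) := by gcongr
    _ = moduleLength A (levelSpan A B ξ n M S) / (p : ENNReal) ^ (n * d) :=
        ENNReal.mul_div_mul_left _ _ (pow_ne_zero _ (by exact_mod_cast by omega))
          (ENNReal.pow_ne_top (ENNReal.natCast_ne_top p))

lemma iInf_lfun_le_of_subset (hξ : ∀ i n, ξ i (n + 1) ^ p = ξ i n)
    (hunion : ∀ b : B, ∃ n, b ∈ rootLevel A B ξ n) (hp1 : 1 < p)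
    {S T : Finset M} (h : (S : Set M) ⊆ (Submodule.span B (T : Set M) : Set M)) :
    (⨅ n, lfun A B p ξ M (S : Set M) n) ≤ ⨅ n, lfun A B p ξ M (T : Set M) n := by
  classical
  have hmem : ∀ s ∈ S, ∃ f : M → B, ∑ t ∈ T, f t • t = s := fun s hs => (Submodule.mem_span_finset.1 (h hs)).imp fun _ hf => hf.2
  choose f hf using hmem
  choose lv hlv using fun s (hs : s ∈ S) (t : M) => hunion (f s hs t)
  set m := S.attach.sup (fun s => T.sup (fun t => lv s.1 s.2 t)) with hm
  have hfm : ∀ s (hs : s ∈ S), ∀ t ∈ T, f s hs t ∈ rootLevel A B ξ m := by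
    intro s hs t ht
    refine rootLevel_mono hξ ?_ (hlv s hs t)
    calc lv s hs t ≤ T.sup (fun t => lv s hs t) := Finset.le_sup ht
      _ ≤ m := Finset.le_sup (f := fun s : {x // x ∈ S} => T.sup fun t => lv s.1 s.2 t)
          (Finset.mem_attach S ⟨s, hs⟩)
  have hincl : ∀ k, m ≤ k → levelSpan A B ξ k M (S : Set M) ≤ levelSpan A B ξ k M (T : Set M) := by
    intro k hk
    rw [levelSpan, Submodule.span_le]
    rintro _ ⟨b, hb, s, hs, rfl⟩
    rw [SetLike.mem_coe, ← hf s hs, Finset.smul_sum]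
    refine Submodule.sum_mem _ fun t ht => ?_
    rw [smul_smul]
    exact Submodule.subset_span
      ⟨b * f s hs t, mul_mem hb (rootLevel_mono hξ hk (hfm s hs t ht)), t, ht, rfl⟩
  refine le_iInf fun n => ?_
  calc (⨅ k, lfun A B p ξ M (S : Set M) k) ≤ lfun A B p ξ M (S : Set M) (n + m) := iInf_le _ _
    _ ≤ lfun A B p ξ M (T : Set M) (n + m) := by
        rw [lfun, lfun]
        gcongr
        exact moduleLength_mono (hincl (n + m) (by omega))
    _ ≤ lfun A B p ξ M (T : Set M) n := lfun_antitone hξ hp1 _ (by omega)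

lemma innerInf_eq (hξ : ∀ i n, ξ i (n + 1) ^ p = ξ i n)
    (hunion : ∀ b : B, ∃ n, b ∈ rootLevel A B ξ n) (hp1 : 1 < p)
    {N : Submodule B M} {S : Finset M} (hS : Submodule.span B (S : Set M) = N) :
    (⨅ (S' : Finset M) (_ : Submodule.span B (S' : Set M) = N) (n : ℕ),
      lfun A B p ξ M (S' : Set M) n) = ⨅ n, lfun A B p ξ M (S : Set M) n := by
  apply le_antisymm
  · exact iInf₂_le S hS
  · refine le_iInf₂ fun S' hS' => ?_
    refine iInf_lfun_le_of_subset hξ hunion hp1 ?_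
    rw [hS', ← hS]
    exact Submodule.subset_span

lemma iInf_lfun_le_normalizedLength (hξ : ∀ i n, ξ i (n + 1) ^ p = ξ i n)
    (hunion : ∀ b : B, ∃ n, b ∈ rootLevel A B ξ n) (hp1 : 1 < p) (S : Finset M) :
    (⨅ n, lfun A B p ξ M (S : Set M) n) ≤ normalizedLength A B p ξ M := by
  rw [normalizedLength_def, ← innerInf_eq hξ hunion hp1 (N := Submodule.span B (S : Set M)) rfl]
  exact le_iSup₂ (f := fun (N : Submodule B M) (_ : N.FG) =>
    ⨅ (S' : Finset M) (_ : Submodule.span B (S' : Set M) = N) (n : ℕ),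
      lfun A B p ξ M (S' : Set M) n) (Submodule.span B (S : Set M)) ⟨S, rfl⟩

lemma lfun_superadd_core [DecidableEq M'] (f : M →ₗ[B] M') {S T : Finset M} (hST : S ⊆ T) (n : ℕ) :
    lfun A B p ξ M' ((T.image f : Finset M') : Set M') n + lfun A B p ξ M (S : Set M) n
      ≤ lfun A B p ξ M (T : Set M) n
        + lfun A B p ξ M' ((S.image f : Finset M') : Set M') n := by
  classical
  have hmapS : (levelSpan A B ξ n M (S : Set M)).map (f.restrictScalars A)
      = levelSpan A B ξ n M' ((S.image f : Finset M') : Set M') := by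
    rw [map_levelSpan, Finset.coe_image]
  have hmapT : (levelSpan A B ξ n M (T : Set M)).map (f.restrictScalars A)
      = levelSpan A B ξ n M' ((T.image f : Finset M') : Set M') := by
    rw [map_levelSpan, Finset.coe_image]
  have e1 := moduleLength_map_add_ker (f.restrictScalars A) (levelSpan A B ξ n M (S : Set M))
  have e2 := moduleLength_map_add_ker (f.restrictScalars A) (levelSpan A B ξ n M (T : Set M))
  rw [hmapS] at e1
  rw [hmapT] at e2
  have hk : moduleLength A (LinearMap.ker (f.restrictScalars A) ⊓ levelSpan A B ξ n M (S : Set M)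
        : Submodule A M)
      ≤ moduleLength A (LinearMap.ker (f.restrictScalars A) ⊓ levelSpan A B ξ n M (T : Set M)
        : Submodule A M) :=
    moduleLength_mono (inf_le_inf_left _ (levelSpan_mono (Finset.coe_subset.2 hST) n))
  have h1 : moduleLength A (levelSpan A B ξ n M' ((T.image f : Finset M') : Set M'))
        + moduleLength A (levelSpan A B ξ n M (S : Set M))
      ≤ moduleLength A (levelSpan A B ξ n M (T : Set M))
        + moduleLength A (levelSpan A B ξ n M' ((S.image f : Finset M') : Set M')) := by
    calc _ = moduleLength A (levelSpan A B ξ n M' ((T.image f : Finset M') : Set M'))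
          + (moduleLength A (levelSpan A B ξ n M' ((S.image f : Finset M') : Set M'))
            + moduleLength A (LinearMap.ker (f.restrictScalars A)
                ⊓ levelSpan A B ξ n M (S : Set M) : Submodule A M)) := by rw [e1]
      _ ≤ moduleLength A (levelSpan A B ξ n M' ((T.image f : Finset M') : Set M'))
          + (moduleLength A (levelSpan A B ξ n M' ((S.image f : Finset M') : Set M'))
            + moduleLength A (LinearMap.ker (f.restrictScalars A)
                ⊓ levelSpan A B ξ n M (T : Set M) : Submodule A M)) := by gcongr
      _ = (moduleLength A (levelSpan A B ξ n M' ((T.image f : Finset M') : Set M'))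
            + moduleLength A (LinearMap.ker (f.restrictScalars A)
                ⊓ levelSpan A B ξ n M (T : Set M) : Submodule A M))
          + moduleLength A (levelSpan A B ξ n M' ((S.image f : Finset M') : Set M')) := by ring
      _ = _ := by rw [e2]
  rw [lfun, lfun, lfun, lfun, ← ENNReal.add_div, ← ENNReal.add_div]
  exact ENNReal.div_le_div h1 le_rfl

lemma iInf_lfun_superadd [DecidableEq M'] (hξ : ∀ i n, ξ i (n + 1) ^ p = ξ i n) (hp1 : 1 < p)
    (f : M →ₗ[B] M') {S T : Finset M} (hST : S ⊆ T) :
    (⨅ n, lfun A B p ξ M' ((T.image f : Finset M') : Set M') n)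
        + (⨅ n, lfun A B p ξ M (S : Set M) n)
      ≤ (⨅ n, lfun A B p ξ M (T : Set M) n)
        + ⨅ n, lfun A B p ξ M' ((S.image f : Finset M') : Set M') n := by
  rw [ENNReal.iInf_add_iInf (fun i j => ⟨max i j,
    add_le_add (lfun_antitone hξ hp1 _ (le_max_left i j))
      (lfun_antitone hξ hp1 _ (le_max_right i j))⟩)]
  rw [ENNReal.iInf_add_iInf (fun i j => ⟨max i j,
    add_le_add (lfun_antitone hξ hp1 _ (le_max_left i j))
      (lfun_antitone hξ hp1 _ (le_max_right i j))⟩)]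
  exact le_iInf fun n => iInf_le_of_le n (lfun_superadd_core f hST n)

lemma normalizedLength_superadd [DecidableEq M] [DecidableEq M']
    (hξ : ∀ i n, ξ i (n + 1) ^ p = ξ i n)
    (hunion : ∀ b : B, ∃ n, b ∈ rootLevel A B ξ n) (hp1 : 1 < p)
    (f : M →ₗ[B] M') (hf : Function.Surjective f) (S : Finset M) :
    normalizedLength A B p ξ M' + (⨅ n, lfun A B p ξ M (S : Set M) n)
      ≤ normalizedLength A B p ξ M
        + ⨅ n, lfun A B p ξ M' ((S.image f : Finset M') : Set M') n := by
  classical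
  conv_lhs => rw [normalizedLength_def]
  rw [ENNReal.iSup_add]
  refine iSup_le fun P => ?_
  by_cases hP : P.FG
  · rw [iSup_pos hP]
    obtain ⟨Tp, hTp⟩ := hP
    set T'' := Tp.image (Function.surjInv hf) ∪ S with hT''
    have hsub : (Tp : Set M') ⊆ (Submodule.span B ((T''.image f : Finset M') : Set M') : Set M') := by
      intro x hx
      refine Submodule.subset_span ?_
      rw [Finset.coe_image]
      refine ⟨Function.surjInv hf x, ?_, Function.surjInv_eq hf x⟩
      rw [hT'']
      exact Finset.mem_coe.2 (Finset.mem_union_left _ (Finset.mem_image_of_mem _ hx))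
    calc (⨅ (S' : Finset M') (_ : Submodule.span B (S' : Set M') = P) (n : ℕ),
          lfun A B p ξ M' (S' : Set M') n) + (⨅ n, lfun A B p ξ M (S : Set M) n)
        = (⨅ n, lfun A B p ξ M' (Tp : Set M') n)
            + (⨅ n, lfun A B p ξ M (S : Set M) n) := by
          rw [innerInf_eq hξ hunion hp1 hTp]
      _ ≤ (⨅ n, lfun A B p ξ M' ((T''.image f : Finset M') : Set M') n)
            + (⨅ n, lfun A B p ξ M (S : Set M) n) :=
          add_le_add_left (iInf_lfun_le_of_subset hξ hunion hp1 hsub) _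
      _ ≤ (⨅ n, lfun A B p ξ M (T'' : Set M) n)
            + (⨅ n, lfun A B p ξ M' ((S.image f : Finset M') : Set M') n) :=
          iInf_lfun_superadd hξ hp1 f Finset.subset_union_right
      _ ≤ normalizedLength A B p ξ M
            + (⨅ n, lfun A B p ξ M' ((S.image f : Finset M') : Set M') n) := by
          gcongr
          exact iInf_lfun_le_normalizedLength hξ hunion hp1 T''
  · rw [iSup_neg hP, bot_eq_zero, zero_add]
    exact le_trans (iInf_lfun_le_normalizedLength hξ hunion hp1 S) le_self_add

lemma normalizedLength_le_of_surjective [DecidableEq M]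
    (hξ : ∀ i n, ξ i (n + 1) ^ p = ξ i n)
    (hunion : ∀ b : B, ∃ n, b ∈ rootLevel A B ξ n) (hp1 : 1 < p)
    (f : M →ₗ[B] M') (hf : Function.Surjective f) :
    normalizedLength A B p ξ M' ≤ normalizedLength A B p ξ M := by
  classical
  conv_lhs => rw [normalizedLength_def]
  refine iSup_le fun N => iSup_le fun hN => ?_
  obtain ⟨S, hS⟩ := hN
  set S' := S.image (Function.surjInv hf) with hS'
  have him : S'.image f = S := by
    rw [hS', Finset.image_image]
    rw [show (f ∘ Function.surjInv hf) = id from funext fun x => Function.surjInv_eq hf x]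
    exact Finset.image_id
  have hpt : ∀ n, lfun A B p ξ M' (S : Set M') n ≤ lfun A B p ξ M (S' : Set M) n := by
    intro n
    simp only [lfun]
    gcongr
    rw [← him, Finset.coe_image, ← map_levelSpan]
    exact moduleLength_map_le _ _
  calc (⨅ (S₀ : Finset M') (_ : Submodule.span B (S₀ : Set M') = N) (n : ℕ),
        lfun A B p ξ M' (S₀ : Set M') n)
      ≤ ⨅ n, lfun A B p ξ M' (S : Set M') n := iInf₂_le S hS
    _ ≤ ⨅ n, lfun A B p ξ M (S' : Set M) n := le_iInf fun n => iInf_le_of_le n (hpt n)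
    _ ≤ normalizedLength A B p ξ M := iInf_lfun_le_normalizedLength hξ hunion hp1 S'

end Lfun

lemma module_finite_of_free_of_finrank_ne_zero {R V : Type*} [CommRing R] [Nontrivial R]
    [AddCommGroup V] [Module R V] [Module.Free R V] (h : Module.finrank R V ≠ 0) :
    Module.Finite R V := by
  haveI : Finite (Module.Free.ChooseBasisIndex R V) := by
    by_contra hinf
    rw [not_finite_iff_infinite] at hinf
    have hr : Module.rank R V = Cardinal.mk (Module.Free.ChooseBasisIndex R V) :=
      Module.Free.rank_eq_card_chooseBasisIndex R V
    refine h ?_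
    show Cardinal.toNat (Module.rank R V) = 0
    rw [hr, Cardinal.toNat_apply_of_aleph0_le (Cardinal.infinite_iff.1 hinf)]
  exact Module.Finite.of_basis (Module.Free.chooseBasis R V)


/-- **Normalized length commutes with filtered colimits along surjective transition maps of
finite normalized length**: if `(M_i)` is a filtered system of `m_A`-power-torsion
`A_∞,0^{nc}`-modules with surjective transition maps and `λ_∞(M_i) < ∞` for every `i`, then
`λ_∞(colim_i M_i) = lim_i λ_∞(M_i) = inf_i λ_∞(M_i)`.  The colimit is presented concretely
as a module `M` together with compatible surjective maps `g i : M i → M` such that any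
element killed by `g i` is killed by some transition map. -/
theorem normalizedLength_colimit_surjective
    (A B : Type u) [CommRing A] [IsNoetherianRing A] [IsLocalRing A]
    [IsAdicComplete (maximalIdeal A) A] (p : ℕ) [Fact p.Prime]
    [CharP (ResidueField A) p] [ExpChar (ResidueField A) p] [PerfectRing (ResidueField A) p]
    [CommRing B] [Algebra A B] (hinj : Function.Injective (algebraMap A B))
    (d : ℕ) (hdim : ringKrullDim A = d) (x : Fin d → A)
    (hx : Ideal.span (Set.range x) = maximalIdeal A)
    (ξ : Fin d → ℕ → B) (hξ0 : ∀ i, ξ i 0 = algebraMap A B (x i))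
    (hξ : ∀ i n, ξ i (n + 1) ^ p = ξ i n)
    (hunion : ∀ b : B, ∃ n, b ∈ rootLevel A B ξ n)
    (hfree : ∀ n, Module.Free A ↥(rootLevel A B ξ n) ∧
      Module.finrank A ↥(rootLevel A B ξ n) = p ^ (n * d))
    (ι : Type u) [Preorder ι] [IsDirected ι (· ≤ ·)] [Nonempty ι]
    (Mod : ι → Type u) [∀ i, AddCommGroup (Mod i)] [∀ i, Module A (Mod i)]
    [∀ i, Module B (Mod i)] [∀ i, IsScalarTower A B (Mod i)]
    (htor : ∀ i, ∃ k : ℕ, ∀ a ∈ maximalIdeal A ^ k, ∀ m : Mod i, a • m = 0)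
    (t : ∀ i j, i ≤ j → (Mod i →ₗ[B] Mod j))
    (ht_id : ∀ i, t i i le_rfl = LinearMap.id)
    (ht_comp : ∀ i j k (hij : i ≤ j) (hjk : j ≤ k),
      (t j k hjk).comp (t i j hij) = t i k (hij.trans hjk))
    (ht_surj : ∀ i j (hij : i ≤ j), Function.Surjective (t i j hij))
    (hfin : ∀ i, normalizedLength A B p ξ (Mod i) ≠ ⊤)
    (M : Type u) [AddCommGroup M] [Module A M] [Module B M] [IsScalarTower A B M]
    (g : ∀ i, Mod i →ₗ[B] M)
    (hg_compat : ∀ i j (hij : i ≤ j), (g j).comp (t i j hij) = g i)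
    (hg_surj : ∀ i, Function.Surjective (g i))
    (hg_ker : ∀ i (y : Mod i), g i y = 0 → ∃ j, ∃ hij : i ≤ j, t i j hij y = 0) :
    normalizedLength A B p ξ M = ⨅ i, normalizedLength A B p ξ (Mod i) := by
  classical
  have hp1 : 1 < p := (Fact.out : p.Prime).one_lt
  have hfiniteA : ∀ n, Module.Finite A ↥(rootLevel A B ξ n) := fun n => by
    haveI := (hfree n).1
    exact module_finite_of_free_of_finrank_ne_zero
      (by rw [(hfree n).2]; exact pow_ne_zero _ (by omega))
  apply le_antisymm
  · exact le_iInf fun i =>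
      normalizedLength_le_of_surjective hξ hunion hp1 (g i) (hg_surj i)
  · set Λ := ⨅ i, normalizedLength A B p ξ (Mod i) with hΛ
    refine ENNReal.le_of_forall_pos_le_add fun ε hε hM => ?_
    obtain ⟨i⟩ := ‹Nonempty ι›
    have hsup : normalizedLength A B p ξ (Mod i) ≠ ⊤ := hfin i
    -- Step 1: a finitely generated "almost optimal" submodule at stage `i`
    obtain ⟨S, hSle⟩ : ∃ S : Finset (Mod i), normalizedLength A B p ξ (Mod i)
        ≤ (⨅ n, lfun A B p ξ (Mod i) (S : Set (Mod i)) n) + ε := by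
      rcases eq_or_ne (normalizedLength A B p ξ (Mod i)) 0 with h0 | h0
      · exact ⟨∅, by rw [h0]; exact zero_le⟩
      · have hlt : normalizedLength A B p ξ (Mod i) - ε < normalizedLength A B p ξ (Mod i) :=
          ENNReal.sub_lt_self hsup h0 (by exact_mod_cast hε.ne')
        obtain ⟨N, hN⟩ := lt_iSup_iff.1 (hlt.trans_le normalizedLength_def.le)
        obtain ⟨hNfg, hN⟩ := lt_iSup_iff.1 hN
        obtain ⟨S, hS⟩ := hNfg
        rw [innerInf_eq hξ hunion hp1 hS] at hN
        refine ⟨S, ?_⟩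
        rcases le_total (normalizedLength A B p ξ (Mod i)) (ε : ENNReal) with hle | hle
        · exact le_trans hle le_add_self
        · exact ((ENNReal.sub_lt_iff_lt_right ENNReal.coe_ne_top hle).1 hN).le
    -- Step 2: superadditivity along the surjective transition maps
    have hstep2 : ∀ j (hij : i ≤ j), normalizedLength A B p ξ (Mod j)
        ≤ (⨅ n, lfun A B p ξ (Mod j)
            ((S.image (t i j hij) : Finset (Mod j)) : Set (Mod j)) n) + ε := by
      intro j hij
      have hsup2 := normalizedLength_superadd hξ hunion hp1 (t i j hij) (ht_surj i j hij) S
      have hc : (⨅ n, lfun A B p ξ (Mod i) (S : Set (Mod i)) n) ≠ ⊤ :=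
        (lt_of_le_of_lt (iInf_lfun_le_normalizedLength hξ hunion hp1 S)
          (lt_top_iff_ne_top.2 hsup)).ne
      have h2 : normalizedLength A B p ξ (Mod j)
            + (⨅ n, lfun A B p ξ (Mod i) (S : Set (Mod i)) n)
          ≤ ((⨅ n, lfun A B p ξ (Mod j)
              ((S.image (t i j hij) : Finset (Mod j)) : Set (Mod j)) n) + ε)
            + (⨅ n, lfun A B p ξ (Mod i) (S : Set (Mod i)) n) := by
        calc normalizedLength A B p ξ (Mod j)
              + (⨅ n, lfun A B p ξ (Mod i) (S : Set (Mod i)) n)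
            ≤ normalizedLength A B p ξ (Mod i)
              + (⨅ n, lfun A B p ξ (Mod j)
                ((S.image (t i j hij) : Finset (Mod j)) : Set (Mod j)) n) := hsup2
          _ ≤ ((⨅ n, lfun A B p ξ (Mod i) (S : Set (Mod i)) n) + ε)
              + (⨅ n, lfun A B p ξ (Mod j)
                ((S.image (t i j hij) : Finset (Mod j)) : Set (Mod j)) n) :=
            add_le_add_left hSle _
          _ = _ := by ring
      exact (ENNReal.add_le_add_iff_right hc).1 h2
    -- Step 3: levelwise comparison with the colimit
    set SM := S.image (g i) with hSM
    have hstep3 : ∀ n, Λ ≤ lfun A B p ξ M (SM : Set M) n + ε := by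
      intro n
      -- find a stage killing the kernel of `g i` on the level span
      obtain ⟨j, hij, hkill⟩ : ∃ j, ∃ hij : i ≤ j,
          ∀ u ∈ levelSpan A B ξ n (Mod i) (S : Set (Mod i)),
            g i u = 0 → t i j hij u = 0 := by
        have hfg : (LinearMap.ker ((g i).restrictScalars A)
            ⊓ levelSpan A B ξ n (Mod i) (S : Set (Mod i))).FG :=
          fg_of_le_fg (levelSpan_fg (hfiniteA n) S) inf_le_right
        obtain ⟨Y, hY⟩ := hfg
        have hYmem : ∀ y ∈ Y, g i y = 0 := by
          intro y hy
          have : y ∈ LinearMap.ker ((g i).restrictScalars A)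
              ⊓ levelSpan A B ξ n (Mod i) (S : Set (Mod i)) :=
            hY ▸ Submodule.subset_span hy
          exact this.1
        set jfun : {y // y ∈ Y} → ι := fun y => (hg_ker i y.1 (hYmem y.1 y.2)).choose with hjfun
        have hjle : ∀ y : {y // y ∈ Y}, i ≤ jfun y :=
          fun y => (hg_ker i y.1 (hYmem y.1 y.2)).choose_spec.choose
        have hjkill : ∀ y : {y // y ∈ Y}, t i (jfun y) (hjle y) y.1 = 0 :=
          fun y => (hg_ker i y.1 (hYmem y.1 y.2)).choose_spec.choose_spec
        obtain ⟨j0, hj0⟩ := Finset.exists_le (insert i (Y.attach.image jfun))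
        have hij0 : i ≤ j0 := hj0 i (Finset.mem_insert_self _ _)
        refine ⟨j0, hij0, ?_⟩
        have hker : LinearMap.ker ((g i).restrictScalars A)
            ⊓ levelSpan A B ξ n (Mod i) (S : Set (Mod i))
            ≤ LinearMap.ker ((t i j0 hij0).restrictScalars A) := by
          rw [← hY, Submodule.span_le]
          intro y hy
          have hyj : jfun ⟨y, hy⟩ ≤ j0 :=
            hj0 _ (Finset.mem_insert_of_mem
              (Finset.mem_image_of_mem jfun (Finset.mem_attach Y ⟨y, hy⟩)))
          have := ht_comp i (jfun ⟨y, hy⟩) j0 (hjle ⟨y, hy⟩) hyj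
          rw [SetLike.mem_coe, LinearMap.mem_ker]
          show t i j0 hij0 y = 0
          have hcast : t i j0 hij0 = t i j0 ((hjle ⟨y, hy⟩).trans hyj) := rfl
          rw [hcast, ← this]
          simp [hjkill ⟨y, hy⟩]
        intro u hu hgu
        exact hker ⟨LinearMap.mem_ker.2 hgu, hu⟩
      -- the kernel-free level span has the same length downstairs
      have hcompat : ∀ u : Mod i, g j (t i j hij u) = g i u := by
        intro u
        conv_rhs => rw [← hg_compat i j hij]
        rfl
      have himg : ⇑(g j) '' ((S.image (t i j hij) : Finset (Mod j)) : Set (Mod j))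
          = (SM : Set M) := by
        rw [hSM, Finset.coe_image, Finset.coe_image, ← Set.image_comp]
        exact Set.image_congr fun u _ => hcompat u
      have hinj' : ∀ u ∈ levelSpan A B ξ n (Mod j)
          ((S.image (t i j hij) : Finset (Mod j)) : Set (Mod j)),
          ((g j).restrictScalars A) u = 0 → u = 0 := by
        intro u hu hgu
        rw [Finset.coe_image, ← map_levelSpan (A := A) (t i j hij)] at hu
        obtain ⟨v, hv, rfl⟩ := hu
        have : g i v = 0 := by
          rw [← hcompat v]
          exact hgu
        exact hkill v hv this
      have heqlen : lfun A B p ξ M (SM : Set M) n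
          = lfun A B p ξ (Mod j)
            ((S.image (t i j hij) : Finset (Mod j)) : Set (Mod j)) n := by
        rw [lfun, lfun]
        congr 1
        have hmap : (levelSpan A B ξ n (Mod j)
              ((S.image (t i j hij) : Finset (Mod j)) : Set (Mod j))).map
              ((g j).restrictScalars A) = levelSpan A B ξ n M (SM : Set M) := by
          rw [map_levelSpan, himg]
        rw [← hmap, moduleLength_map_eq _ _ hinj']
      calc Λ ≤ normalizedLength A B p ξ (Mod j) := iInf_le _ j
        _ ≤ (⨅ k, lfun A B p ξ (Mod j)
              ((S.image (t i j hij) : Finset (Mod j)) : Set (Mod j)) k) + ε := hstep2 j hij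
        _ ≤ lfun A B p ξ (Mod j)
              ((S.image (t i j hij) : Finset (Mod j)) : Set (Mod j)) n + ε :=
            add_le_add_left (iInf_le _ n) _
        _ = lfun A B p ξ M (SM : Set M) n + ε := by rw [heqlen]
    have hfinal : Λ ≤ (⨅ n, lfun A B p ξ M (SM : Set M) n) + ε := by
      rw [ENNReal.iInf_add]
      exact le_iInf hstep3
    exact le_trans hfinal
      (add_le_add_left (iInf_lfun_le_normalizedLength hξ hunion hp1 SM) _)
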